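/- Any Moser-Carleson-Chang tower μ_{C₊,C₋} satisfies ‖∇μ_{C₊,C₋}‖₂² ≥ 1, with equality if and only if C = C₊ ∪ C₋ consists of a single point. -/

import Mathlib

open Real MeasureTheory Set Filter Topology

lemma tower_limit {w g : ℝ → ℝ} {s t : Set ℝ} {x L : ℝ}
    (hc : ContinuousWithinAt w s x) (hts : t ⊆ s) (ht : (𝓝[t] x).NeBot)
    (hg : ∀ y ∈ t, w y = g y) (hgt : Filter.Tendsto g (𝓝[t] x) (𝓝 L)) :
    w x = L := by
  have h1 : Filter.Tendsto w (𝓝[t] x) (𝓝 (w x)) := hc.mono_left (nhdsWithin_mono x hts)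
  have h2 : Filter.Tendsto w (𝓝[t] x) (𝓝 L) :=
    hgt.congr' (eventually_of_mem self_mem_nhdsWithin (fun y hy => (hg y hy).symm))
  exact tendsto_nhds_unique h1 h2

lemma neBot_Ioo_left {a b : ℝ} (hab : a < b) : (𝓝[Set.Ioo a b] a).NeBot := by
  rw [← mem_closure_iff_nhdsWithin_neBot, closure_Ioo hab.ne]
  exact ⟨le_rfl, hab.le⟩

lemma neBot_Ioo_right {a b : ℝ} (hab : a < b) : (𝓝[Set.Ioo a b] b).NeBot := by
  rw [← mem_closure_iff_nhdsWithin_neBot, closure_Ioo hab.ne]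
  exact ⟨hab.le, le_rfl⟩

lemma aff_continuousAt {A B x : ℝ} (hx : x ≠ 0) :
    ContinuousAt (fun r : ℝ => A + B * Real.log r⁻¹) x := by
  have h1 : ContinuousAt (fun r : ℝ => r⁻¹) x := continuousAt_inv₀ hx
  exact continuousAt_const.add
    (continuousAt_const.mul ((Real.continuousAt_log (inv_ne_zero hx)).comp h1))

lemma gap_deriv {w : ℝ → ℝ} {a b A B : ℝ}
    (hAB : ∀ r ∈ Set.Ioo a b, w r = A + B * Real.log r⁻¹)
    {r : ℝ} (hr : r ∈ Set.Ioo a b) (hrpos : 0 < r) : deriv w r = -B / r := by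
  have hev : w =ᶠ[nhds r] fun s => A + B * Real.log s⁻¹ :=
    eventually_of_mem (isOpen_Ioo.mem_nhds hr) hAB
  have hd : HasDerivAt (fun s : ℝ => A + B * Real.log s⁻¹) (-B / r) r := by
    have h1 : HasDerivAt (fun s : ℝ => A + B * -Real.log s) (B * -r⁻¹) r :=
      (((Real.hasDerivAt_log hrpos.ne').neg).const_mul B).const_add A
    have h2 : (fun s : ℝ => A + B * -Real.log s) = fun s : ℝ => A + B * Real.log s⁻¹ := by
      funext s; rw [Real.log_inv]
    rw [h2] at h1
    convert h1 using 1; field_simp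
  rw [hev.deriv_eq]; exact hd.deriv

lemma pos_measure_contra {a b : ℝ} (hab : a < b) {p : ℝ → Prop}
    (h : ∀ᵐ r, r ∈ Set.Ioo a b → p r) (h2 : ∀ r ∈ Set.Ioo a b, ¬ p r) : False := by
  have h3 : ∀ᵐ r, r ∉ Set.Ioo a b := h.mono (fun r hr hmem => h2 r hmem (hr hmem))
  rw [ae_iff] at h3
  simp only [not_not] at h3
  have he : {r : ℝ | r ∈ Set.Ioo a b} = Set.Ioo a b := rfl
  rw [he, Real.volume_Ioo] at h3
  exact absurd h3 (by simp; linarith)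


/-- `w` is a Moser-Carleson-Chang tower with positive set `Cp` and negative set `Cm`:
a continuous radial `H¹₀`-function on the unit disk equal to `±√(log(1/r)/(2π))`
on `Cp` (resp. `Cm`) and radially harmonic (affine in `log(1/r)`) on the intervals
complementary to `C = Cp ∪ Cm` in `(0,1)`. -/
def IsSignedTower (Cp Cm : Set ℝ) (w : ℝ → ℝ) : Prop :=
  IsClosed Cp ∧ IsClosed Cm ∧ Disjoint Cp Cm ∧
  Cp ⊆ Set.Ioo 0 1 ∧ Cm ⊆ Set.Ioo 0 1 ∧ (Cp ∪ Cm).Nonempty ∧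
  ContinuousOn w (Set.Ioc 0 1) ∧ w 1 = 0 ∧
  (∀ r ∈ Cp, w r = Real.sqrt (Real.log r⁻¹ / (2 * π))) ∧
  (∀ r ∈ Cm, w r = -Real.sqrt (Real.log r⁻¹ / (2 * π))) ∧
  (∀ a b : ℝ, a < b → Set.Ioo a b ⊆ Set.Ioo 0 1 \ (Cp ∪ Cm) →
    ∃ A B : ℝ, ∀ r ∈ Set.Ioo a b, w r = A + B * Real.log r⁻¹) ∧
  MeasureTheory.IntegrableOn (fun r => (deriv w r) ^ 2 * r) (Set.Ioo 0 1) volume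

/-- Any Moser-Carleson-Chang tower `μ_{C₊,C₋}` satisfies `‖∇μ_{C₊,C₋}‖₂² ≥ 1`, with
equality if and only if `C = C₊ ∪ C₋` consists of a single point. -/
theorem signedTower_energy_ge_one (Cp Cm : Set ℝ) (w : ℝ → ℝ)
    (hw : IsSignedTower Cp Cm w) :
    1 ≤ 2 * π * ∫ r in Set.Ioo (0:ℝ) 1, (deriv w r) ^ 2 * r ∧
    (2 * π * ∫ r in Set.Ioo (0:ℝ) 1, (deriv w r) ^ 2 * r = 1 ↔
      ∃ t : ℝ, Cp ∪ Cm = {t}) := by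
  obtain ⟨hCp, hCm, hdisj, hCpSub, hCmSub, hne, hcont, hw1, hwp, hwm, haff, hint⟩ := hw
  set C := Cp ∪ Cm with hC
  have hCclosed : IsClosed C := hCp.union hCm
  have hCsub : C ⊆ Set.Ioo 0 1 := union_subset hCpSub hCmSub
  have hbdd : BddAbove C := ⟨1, fun x hx => (hCsub hx).2.le⟩
  set b := sSup C with hbdef
  have hbC : b ∈ C := hCclosed.csSup_mem hne hbdd
  have hb0 : 0 < b := (hCsub hbC).1
  have hb1 : b < 1 := (hCsub hbC).2
  have hub : ∀ c ∈ C, c ≤ b := fun c hc => le_csSup hbdd hc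
  have hsq : ∀ c ∈ C, (w c)^2 = Real.log c⁻¹ / (2*π) := by
    intro c hc
    have hcpos := (hCsub hc).1
    have hclt := (hCsub hc).2
    have hlog : 0 ≤ Real.log c⁻¹ / (2*π) := by
      apply div_nonneg _ (by positivity)
      exact (Real.log_pos ((one_lt_inv₀ hcpos).mpr hclt)).le
    rcases hc with hc | hc
    · rw [hwp c hc, sq_sqrt hlog]
    · rw [hwm c hc, neg_sq, sq_sqrt hlog]
  -- affine on (b,1)
  have hsubB : Set.Ioo b 1 ⊆ Set.Ioo 0 1 \ C := fun r hr =>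
    ⟨⟨hb0.trans hr.1, hr.2⟩, fun hrC => absurd (hub r hrC) (not_le.mpr hr.1)⟩
  obtain ⟨A, B, hAB⟩ := haff b 1 hb1 hsubB
  have hIooIoc : Set.Ioo b 1 ⊆ Set.Ioc 0 1 := fun r hr => ⟨hb0.trans hr.1, hr.2.le⟩
  have hA0 : A = 0 := by
    have h := tower_limit (hcont 1 ⟨zero_lt_one, le_rfl⟩) hIooIoc (neBot_Ioo_right hb1) hAB
      ((aff_continuousAt one_ne_zero).tendsto.mono_left nhdsWithin_le_nhds)
    rw [hw1] at h; simpa using h.symm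
  have hwb : w b = B * Real.log b⁻¹ := by
    have h := tower_limit (hcont b ⟨hb0, hb1.le⟩) hIooIoc (neBot_Ioo_left hb1) hAB
      ((aff_continuousAt hb0.ne').tendsto.mono_left nhdsWithin_le_nhds)
    rw [hA0] at h; simpa using h
  set L := Real.log b⁻¹ with hLdef
  have hL : 0 < L := Real.log_pos ((one_lt_inv₀ hb0).mpr hb1)
  have hB2 : B^2 * L = 1/(2*π) := by
    have h1 := hsq b hbC
    rw [hwb] at h1
    have h2 : (B^2*L) * L = (1/(2*π)) * L := by
      linear_combination h1
    exact mul_right_cancel₀ hL.ne' h2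
  have hderivB : ∀ r ∈ Set.Ioo b 1, deriv w r = -B / r :=
    fun r hr => gap_deriv hAB hr (hb0.trans hr.1)
  have hI2 : ∫ r in Set.Ioo b 1, (deriv w r)^2 * r = 1/(2*π) := by
    have heq : Set.EqOn (fun r => (deriv w r)^2 * r) (fun r => B^2 * r⁻¹) (Set.Ioo b 1) := by
      intro r hr
      have hrpos : 0 < r := hb0.trans hr.1
      simp only
      rw [hderivB r hr]
      field_simp
    rw [setIntegral_congr_fun measurableSet_Ioo heq, integral_const_mul]
    have hinv : ∫ r in Set.Ioo b 1, r⁻¹ = L := by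
      rw [← integral_Ioc_eq_integral_Ioo, ← intervalIntegral.integral_of_le hb1.le,
        integral_inv_of_pos hb0 one_pos, hLdef]
      rw [Real.log_inv]
      rw [← Real.log_inv]
      congr 1
      field_simp
    rw [hinv]
    exact hB2
  have hint1 : IntegrableOn (fun r => (deriv w r)^2 * r) (Set.Ioo 0 b) :=
    hint.mono_set (fun r hr => ⟨hr.1, hr.2.trans hb1⟩)
  have hint2 : IntegrableOn (fun r => (deriv w r)^2 * r) (Set.Ico b 1) :=
    hint.mono_set (fun r hr => ⟨hb0.trans_le hr.1, hr.2⟩)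
  have hsplit : ∫ r in Set.Ioo (0:ℝ) 1, (deriv w r)^2 * r
      = (∫ r in Set.Ioo 0 b, (deriv w r)^2 * r) + ∫ r in Set.Ioo b 1, (deriv w r)^2 * r := by
    rw [← Ioo_union_Ico_eq_Ioo hb0 hb1.le,
      setIntegral_union (Set.disjoint_left.mpr fun x hx hx2 => absurd hx.2 (not_lt.mpr hx2.1))
        measurableSet_Ico hint1 hint2, integral_Ico_eq_integral_Ioo]
  set I1 := ∫ r in Set.Ioo (0:ℝ) b, (deriv w r)^2 * r with hI1def
  have hI1nn : 0 ≤ I1 :=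
    setIntegral_nonneg measurableSet_Ioo (fun r hr => mul_nonneg (sq_nonneg _) hr.1.le)
  have hE : 2*π*∫ r in Set.Ioo (0:ℝ) 1, (deriv w r)^2 * r = 2*π*I1 + 1 := by
    rw [hsplit, hI2]
    have hπ : π ≠ 0 := pi_ne_zero
    field_simp
  constructor
  · rw [hE]
    have h := mul_nonneg (by positivity : (0:ℝ) ≤ 2*π) hI1nn
    linarith
  constructor
  · intro heq
    rw [hE] at heq
    have h2π : (2*π:ℝ) ≠ 0 := by positivity
    have hI10 : I1 = 0 := by
      have h0 : 2*π*I1 = 0 := by linarith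
      rcases mul_eq_zero.mp h0 with h | h
      · exact absurd h h2π
      · exact h
    have haeI : ∀ᵐ r, r ∈ Set.Ioo (0:ℝ) b → deriv w r = 0 := by
      have hf0 : ∀ᵐ r ∂(volume.restrict (Set.Ioo (0:ℝ) b)), (deriv w r)^2 * r = 0 := by
        have hnn : 0 ≤ᵐ[volume.restrict (Set.Ioo (0:ℝ) b)]
            (fun r => (deriv w r)^2 * r) :=
          (ae_restrict_iff' measurableSet_Ioo).mpr
            (ae_of_all _ (fun r hr => mul_nonneg (sq_nonneg _) hr.1.le))
        exact (integral_eq_zero_iff_of_nonneg_ae hnn hint1).mp hI10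
      have h2' := (ae_restrict_iff' measurableSet_Ioo).mp hf0
      refine h2'.mono (fun r hr hmem => ?_)
      have h3 := hr hmem
      have h4 : deriv w r ^ 2 = 0 := by
        rcases mul_eq_zero.mp h3 with h | h
        · exact h
        · exact absurd h hmem.1.ne'
      exact sq_eq_zero_iff.mp h4
    refine ⟨b, ?_⟩
    refine Subset.antisymm ?_ (singleton_subset_iff.mpr hbC)
    intro c hc
    simp only [mem_singleton_iff]
    by_contra hcb
    have hclt : c < b := lt_of_le_of_ne (hub c hc) hcb
    have hc0 : 0 < c := (hCsub hc).1
    by_cases hgapx : ∃ x ∈ Set.Ioo c b, x ∉ C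
    · obtain ⟨x, hx, hxC⟩ := hgapx
      set a' := sSup (C ∩ Set.Iic x) with ha'def
      set b' := sInf (C ∩ Set.Ici x) with hb'def
      have hS1ne : (C ∩ Set.Iic x).Nonempty := ⟨c, hc, hx.1.le⟩
      have hS1bdd : BddAbove (C ∩ Set.Iic x) := ⟨x, fun y hy => hy.2⟩
      have ha'mem : a' ∈ C ∩ Set.Iic x := (hCclosed.inter isClosed_Iic).csSup_mem hS1ne hS1bdd
      have hca' : c ≤ a' := le_csSup hS1bdd ⟨hc, hx.1.le⟩
      have ha'x : a' < x := lt_of_le_of_ne ha'mem.2 (fun h => hxC (h ▸ ha'mem.1))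
      have hS2ne : (C ∩ Set.Ici x).Nonempty := ⟨b, hbC, hx.2.le⟩
      have hS2bdd : BddBelow (C ∩ Set.Ici x) := ⟨x, fun y hy => hy.2⟩
      have hb'mem : b' ∈ C ∩ Set.Ici x := (hCclosed.inter isClosed_Ici).csInf_mem hS2ne hS2bdd
      have hb'b : b' ≤ b := csInf_le hS2bdd ⟨hbC, hx.2.le⟩
      have hxb' : x < b' := lt_of_le_of_ne hb'mem.2 (fun h => hxC (by rw [h]; exact hb'mem.1))
      have ha'b' : a' < b' := ha'x.trans hxb'
      have ha'0 : 0 < a' := hc0.trans_le hca'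
      have hb'1 : b' < 1 := lt_of_le_of_lt hb'b hb1
      have hgapsub : Set.Ioo a' b' ⊆ Set.Ioo 0 1 \ C := by
        intro r hr
        refine ⟨⟨ha'0.trans hr.1, hr.2.trans hb'1⟩, fun hrC => ?_⟩
        rcases le_total r x with h | h
        · exact absurd (le_csSup hS1bdd ⟨hrC, h⟩) (not_le.mpr hr.1)
        · exact absurd (csInf_le hS2bdd ⟨hrC, h⟩) (not_le.mpr hr.2)
      obtain ⟨A', B', hAB'⟩ := haff a' b' ha'b' hgapsub
      have hsubIoo : Set.Ioo a' b' ⊆ Set.Ioo 0 b :=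
        fun r hr => ⟨ha'0.trans hr.1, hr.2.trans_le hb'b⟩
      have hB'0 : B' = 0 := by
        by_contra hB'
        refine pos_measure_contra ha'b' (haeI.mono (fun r hr hmem => hr (hsubIoo hmem))) ?_
        intro r hr h0
        rw [gap_deriv hAB' hr (ha'0.trans hr.1)] at h0
        rcases div_eq_zero_iff.mp h0 with h | h
        · exact hB' (neg_eq_zero.mp h)
        · exact (ha'0.trans hr.1).ne' h
      have hconst : ∀ y ∈ Set.Ioo a' b', w y = A' := by
        intro y hy; rw [hAB' y hy, hB'0]; ring
      have hIoc' : Set.Ioo a' b' ⊆ Set.Ioc 0 1 :=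
        fun r hr => ⟨ha'0.trans hr.1, (hr.2.trans hb'1).le⟩
      have hwa' : w a' = A' :=
        tower_limit (hcont a' ⟨ha'0, (ha'x.trans (hx.2.trans hb1)).le⟩) hIoc'
          (neBot_Ioo_left ha'b') hconst tendsto_const_nhds
      have hwb' : w b' = A' :=
        tower_limit (hcont b' ⟨ha'0.trans ha'b', hb'1.le⟩) hIoc'
          (neBot_Ioo_right ha'b') hconst tendsto_const_nhds
      have hlogeq : Real.log a'⁻¹ = Real.log b'⁻¹ := by
        have h1 := hsq a' ha'mem.1
        have h2 := hsq b' hb'mem.1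
        rw [hwa'] at h1
        rw [hwb'] at h2
        have h3 := h1.symm.trans h2
        have hπ : (2*π:ℝ) ≠ 0 := by positivity
        field_simp at h3
        simpa [one_div] using h3
      have hinveq : a'⁻¹ = b'⁻¹ := by
        rw [← Real.exp_log (inv_pos.mpr ha'0), hlogeq,
          Real.exp_log (inv_pos.mpr (ha'0.trans ha'b'))]
      exact ha'b'.ne (inv_injective hinveq)
    · push_neg at hgapx
      have honesign : (Set.Ioo c b ⊆ Cp) ∨ (Set.Ioo c b ⊆ Cm) := by
        by_contra hcon
        push_neg at hcon
        obtain ⟨hnp, hnm⟩ := hcon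
        obtain ⟨x1, hx1, hx1n⟩ := not_subset.mp hnp
        obtain ⟨x2, hx2, hx2n⟩ := not_subset.mp hnm
        have hcover : Set.Ioo c b ⊆ Cpᶜ ∪ Cmᶜ := by
          intro y hy
          by_cases hyp : y ∈ Cp
          · exact Or.inr (fun hym => (disjoint_left.mp hdisj hyp) hym)
          · exact Or.inl hyp
        obtain ⟨y, hy, hyp, hym⟩ := isPreconnected_Ioo (a := c) (b := b) Cpᶜ Cmᶜ
          hCp.isOpen_compl hCm.isOpen_compl hcover ⟨x1, hx1, hx1n⟩ ⟨x2, hx2, hx2n⟩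
        rcases hgapx y hy with hy' | hy'
        · exact hyp hy'
        · exact hym hy'
      have hderivne : ∀ r ∈ Set.Ioo c b, ¬ deriv w r = 0 := by
        intro r hr
        have hr0 : 0 < r := hc0.trans hr.1
        have hr1 : r < 1 := hr.2.trans hb1
        have hgpos : 0 < Real.log r⁻¹ / (2*π) :=
          div_pos (Real.log_pos ((one_lt_inv₀ hr0).mpr hr1)) (by positivity)
        have hd : HasDerivAt (fun s : ℝ => Real.sqrt (Real.log s⁻¹ / (2*π)))
            ((-r⁻¹/(2*π)) / (2 * Real.sqrt (Real.log r⁻¹/(2*π)))) r := by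
          have h1 : HasDerivAt (fun s : ℝ => Real.log s⁻¹ / (2*π)) (-r⁻¹/(2*π)) r := by
            have h0 : HasDerivAt (fun s : ℝ => -Real.log s / (2*π)) (-r⁻¹/(2*π)) r :=
              ((Real.hasDerivAt_log hr0.ne').neg).div_const (2*π)
            have he : (fun s : ℝ => -Real.log s / (2*π)) = fun s : ℝ => Real.log s⁻¹/(2*π) := by
              funext s; rw [Real.log_inv]
            rwa [he] at h0
          exact h1.sqrt hgpos.ne'
        have hne0 : (-r⁻¹/(2*π)) / (2 * Real.sqrt (Real.log r⁻¹/(2*π))) ≠ 0 := by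
          apply div_ne_zero
          · apply div_ne_zero
            · exact neg_ne_zero.mpr (inv_ne_zero hr0.ne')
            · positivity
          · have hs := Real.sqrt_pos.mpr hgpos
            positivity
        rcases honesign with hsub | hsub
        · have hev : w =ᶠ[nhds r] (fun s => Real.sqrt (Real.log s⁻¹/(2*π))) :=
            eventually_of_mem (isOpen_Ioo.mem_nhds hr) (fun y hy => hwp y (hsub hy))
          rw [hev.deriv_eq, hd.deriv]
          exact hne0
        · have hev : w =ᶠ[nhds r] (fun s => -Real.sqrt (Real.log s⁻¹/(2*π))) :=
            eventually_of_mem (isOpen_Ioo.mem_nhds hr) (fun y hy => hwm y (hsub hy))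
          rw [hev.deriv_eq, HasDerivAt.deriv (f := fun s => -Real.sqrt (Real.log s⁻¹/(2*π))) hd.neg]
          exact neg_ne_zero.mpr hne0
      exact pos_measure_contra hclt
        (haeI.mono (fun r hr hmem => hr ⟨hc0.trans hmem.1, hmem.2⟩)) hderivne
  · rintro ⟨t, hCt⟩
    have hbt : b = t := by
      have h := hbC
      rw [hCt] at h
      exact h
    have hsub0 : Set.Ioo (0:ℝ) b ⊆ Set.Ioo 0 1 \ C := by
      intro r hr
      refine ⟨⟨hr.1, hr.2.trans hb1⟩, ?_⟩
      rw [hCt]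
      simp only [mem_singleton_iff]
      exact fun h => hr.2.ne (h.trans hbt.symm)
    obtain ⟨A', B', hAB'⟩ := haff 0 b hb0 hsub0
    have hB'0 : B' = 0 := by
      by_contra hB'
      have hint' : IntegrableOn (fun r : ℝ => B'^2 * r⁻¹) (Set.Ioo 0 b) := by
        refine hint1.congr_fun ?_ measurableSet_Ioo
        intro r hr
        show deriv w r ^ 2 * r = B' ^ 2 * r⁻¹
        rw [gap_deriv hAB' hr hr.1, div_pow, neg_sq]
        have hrne : r ≠ 0 := hr.1.ne'
        field_simp
      have hfe : (fun r : ℝ => (B'^2)⁻¹ * (B'^2 * r⁻¹)) = fun r : ℝ => r⁻¹ := by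
        funext r
        field_simp
      have hint'' : IntegrableOn (fun r : ℝ => r⁻¹) (Set.Ioo 0 b) := by
        have h := hint'.const_mul (B'^2)⁻¹
        rwa [hfe] at h
      have hint''' : IntegrableOn (fun r : ℝ => r ^ (-1 : ℝ)) (Set.Ioo (0:ℝ) b) := by
        refine hint''.congr_fun ?_ measurableSet_Ioo
        intro r hr
        show r⁻¹ = r ^ (-1 : ℝ)
        exact (Real.rpow_neg_one r).symm
      rw [intervalIntegral.integrableOn_Ioo_rpow_iff hb0] at hint'''
      linarith
    have hI10 : I1 = 0 := by
      have heq : Set.EqOn (fun r => (deriv w r)^2 * r) (fun _ => (0:ℝ)) (Set.Ioo (0:ℝ) b) := by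
        intro r hr
        simp only
        rw [gap_deriv hAB' hr hr.1, hB'0]
        norm_num
      rw [hI1def, setIntegral_congr_fun measurableSet_Ioo heq]
      simp
    rw [hE, hI10]
    ring
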